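/- Let F be the free group on x₁,…,x_n and let λ₁,…,λ_n : ℤ → ℝ be bounded functions with λ_j(−m) = −λ_j(m) for all m. Define φ : F → ℝ by φ(1) = 0 and φ(g) = Σ_{j=1}^k λ_{n_j}(m_j), where g = x_{n₁}^{m₁}⋯x_{n_k}^{m_k} is the unique expression with all m_j ≠ 0 and no consecutive n_j equal. Then φ is a symmetric quasimorphism: φ(g⁻¹) = −φ(g) for all g, and there exists D > 0 with |φ(g) + φ(h) − φ(gh)| < D for all g, h ∈ F. -/

import Mathlib

/-! Common definitions: free groups, reduced products, (bounded) cochains,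
decompositions of a free group, Brooks and Rolli quasimorphisms. -/

section Preamble

variable {α : Type} [DecidableEq α]

/-- Word length of an element of a free group (length of its reduced word). -/
def wlen (g : FreeGroup α) : ℕ := g.toWord.length

/-- A product `g = g₁ ⋯ g_k` is reduced (no cancellation) if the word lengths add up. -/
def ReducedProd (l : List (FreeGroup α)) : Prop :=
  wlen l.prod = (l.map wlen).sum

/-- Inhomogeneous coboundary `δ¹φ(g,h) = φ(g) + φ(h) − φ(gh)`. -/
def d1 (φ : FreeGroup α → ℝ) (g h : FreeGroup α) : ℝ := φ g + φ h - φ (g * h)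

/-- Inhomogeneous coboundary `δ²η`. -/
def d2 (η : FreeGroup α → FreeGroup α → ℝ) (g h i : FreeGroup α) : ℝ :=
  η h i - η (g * h) i + η g (h * i) - η g h

/-- Inhomogeneous coboundary `δ³β`. -/
def d3 (β : FreeGroup α → FreeGroup α → FreeGroup α → ℝ) (g h i j : FreeGroup α) : ℝ :=
  β h i j - β (g * h) i j + β g (h * i) j - β g h (i * j) + β g h i

/-- A quasimorphism on the free group. -/
def IsQuasimorphism (φ : FreeGroup α → ℝ) : Prop :=
  ∃ D > (0 : ℝ), ∀ g h : FreeGroup α, |d1 φ g h| < D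

/-- A symmetric map: `φ(g⁻¹) = −φ(g)`. -/
def IsSymmetricMap (φ : FreeGroup α → ℝ) : Prop :=
  ∀ g : FreeGroup α, φ g⁻¹ = -φ g

/-- Longest common initial sequence of two lists. -/
def commonPrefix {β : Type} [DecidableEq β] : List β → List β → List β
  | a :: as, b :: bs => if a = b then a :: commonPrefix as bs else []
  | _, _ => []

/-- Reversed, entrywise-inverted list: `(g₁, …, g_k) ↦ (g_k⁻¹, …, g₁⁻¹)`. -/
def seqInv (l : List (FreeGroup α)) : List (FreeGroup α) :=
  (l.map fun x => x⁻¹).reverse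

/-- `(c̲₁⁻¹)`: the common initial sequence of `Δ(g)` and `Δ(gh)`. -/
def cSeq1 (D : FreeGroup α → List (FreeGroup α)) (g h : FreeGroup α) : List (FreeGroup α) :=
  commonPrefix (D g) (D (g * h))

/-- `(c̲₂⁻¹)`: the common initial sequence of `Δ(g⁻¹)` and `Δ(h)`. -/
def cSeq2 (D : FreeGroup α → List (FreeGroup α)) (g h : FreeGroup α) : List (FreeGroup α) :=
  commonPrefix (D g⁻¹) (D h)

/-- `(c̲₃⁻¹)`: the common initial sequence of `Δ(h⁻¹)` and `Δ(h⁻¹g⁻¹)`. -/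
def cSeq3 (D : FreeGroup α → List (FreeGroup α)) (g h : FreeGroup α) : List (FreeGroup α) :=
  commonPrefix (D h⁻¹) (D (h⁻¹ * g⁻¹))

/-- `(r̲₁)`: middle part of `Δ(g) = (c̲₁⁻¹)·(r̲₁)·(c̲₂)`. -/
def rSeq1 (D : FreeGroup α → List (FreeGroup α)) (g h : FreeGroup α) : List (FreeGroup α) :=
  ((D g).drop (cSeq1 D g h).length).take
    ((D g).length - (cSeq1 D g h).length - (cSeq2 D g h).length)

/-- `(r̲₂)`: middle part of `Δ(h) = (c̲₂⁻¹)·(r̲₂)·(c̲₃)`. -/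
def rSeq2 (D : FreeGroup α → List (FreeGroup α)) (g h : FreeGroup α) : List (FreeGroup α) :=
  ((D h).drop (cSeq2 D g h).length).take
    ((D h).length - (cSeq2 D g h).length - (cSeq3 D g h).length)

/-- `(r̲₃)`: middle part of `Δ(h⁻¹g⁻¹) = (c̲₃⁻¹)·(r̲₃)·(c̲₁)`. -/
def rSeq3 (D : FreeGroup α → List (FreeGroup α)) (g h : FreeGroup α) : List (FreeGroup α) :=
  ((D (h⁻¹ * g⁻¹)).drop (cSeq3 D g h).length).take
    ((D (h⁻¹ * g⁻¹)).length - (cSeq3 D g h).length - (cSeq1 D g h).length)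

/-- A decomposition `Δ` of the free group `F` into pieces `P` (Definition 3.1). -/
structure Decomp (α : Type) [DecidableEq α] where
  /-- the set of pieces -/
  pieces : Set (FreeGroup α)
  /-- the decomposition map `Δ` -/
  D : FreeGroup α → List (FreeGroup α)
  /-- the uniform bound `R` on the r-parts of `Δ`-triangles -/
  R : ℕ
  R_pos : 0 < R
  pieces_symm : ∀ p ∈ pieces, p⁻¹ ∈ pieces
  one_notin_pieces : (1 : FreeGroup α) ∉ pieces
  mem_pieces : ∀ g : FreeGroup α, ∀ p ∈ D g, p ∈ pieces
  prod_eq : ∀ g : FreeGroup α, (D g).prod = g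
  reduced : ∀ g : FreeGroup α, ReducedProd (D g)
  inv_eq : ∀ g : FreeGroup α, D g⁻¹ = seqInv (D g)
  infix_closed : ∀ (g : FreeGroup α) (l₁ l₂ l₃ : List (FreeGroup α)),
    D g = l₁ ++ l₂ ++ l₃ → D l₂.prod = l₂
  triangle₁ : ∀ g h : FreeGroup α, D g = cSeq1 D g h ++ rSeq1 D g h ++ seqInv (cSeq2 D g h)
  triangle₂ : ∀ g h : FreeGroup α, D h = cSeq2 D g h ++ rSeq2 D g h ++ seqInv (cSeq3 D g h)
  triangle₃ : ∀ g h : FreeGroup α,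
    D (h⁻¹ * g⁻¹) = cSeq3 D g h ++ rSeq3 D g h ++ seqInv (cSeq1 D g h)
  rBound₁ : ∀ g h : FreeGroup α, (rSeq1 D g h).length ≤ R
  rBound₂ : ∀ g h : FreeGroup α, (rSeq2 D g h).length ≤ R
  rBound₃ : ∀ g h : FreeGroup α, (rSeq3 D g h).length ≤ R

/-- The `Δ`-decomposable map `φ_{λ,Δ}(g) = Σ_j λ(g_j)`. -/
def decQM (D : FreeGroup α → List (FreeGroup α)) (lam : FreeGroup α → ℝ)
    (g : FreeGroup α) : ℝ :=
  ((D g).map lam).sum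

/-- `φ` is a `Δ`-decomposable quasimorphism (Definition 3.8). -/
def IsDecomposable (dec : Decomp α) (φ : FreeGroup α → ℝ) : Prop :=
  ∃ lam : FreeGroup α → ℝ,
    (∃ B : ℝ, ∀ p ∈ dec.pieces, |lam p| ≤ B) ∧
    (∀ p ∈ dec.pieces, lam p⁻¹ = -lam p) ∧
    φ = decQM dec.D lam

/-- Agreement (as an extended natural number) of two sequences:
`⊤` if they are equal, otherwise the length of their common initial sequence. -/
def seqAgree {β : Type} [DecidableEq β] (l l' : List β) : ℕ∞ :=
  if l = l' then ⊤ else ((commonPrefix l l').length : ℕ∞)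

/-- The quantity `N_Δ((g,h),(g',h'))` measuring how much the `Δ`-triangles of the two
pairs agree around their centres. -/
noncomputable def NDelta (D : FreeGroup α → List (FreeGroup α))
    (p q : FreeGroup α × FreeGroup α) : ℕ∞ :=
  if p = q then ⊤
  else if rSeq1 D p.1 p.2 = rSeq1 D q.1 q.2 ∧ rSeq2 D p.1 p.2 = rSeq2 D q.1 q.2 ∧
            rSeq3 D p.1 p.2 = rSeq3 D q.1 q.2 then
    min (seqAgree (seqInv (cSeq1 D p.1 p.2)) (seqInv (cSeq1 D q.1 q.2)))
      (min (seqAgree (seqInv (cSeq2 D p.1 p.2)) (seqInv (cSeq2 D q.1 q.2)))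
        (seqAgree (seqInv (cSeq3 D p.1 p.2)) (seqInv (cSeq3 D q.1 q.2))))
  else 0

/-- A bounded symmetric `2`-cocycle `ω` is `Δ`-continuous (Definition 3.12). -/
def DeltaContinuousCocycle (D : FreeGroup α → List (FreeGroup α))
    (ω : FreeGroup α → FreeGroup α → ℝ) : Prop :=
  ∃ s : ℕ → ℝ, (∀ j, 0 ≤ s j) ∧ Summable s ∧
    ∀ p q : FreeGroup α × FreeGroup α, p ≠ q → ∀ N : ℕ, NDelta D p q = (N : ℕ∞) →
      |ω p.1 p.2 - ω q.1 q.2| ≤ s N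

/-- A quasimorphism `ψ` is `Δ`-continuous: it is symmetric and `δ¹ψ` is `Δ`-continuous. -/
def DeltaContinuousQM (D : FreeGroup α → List (FreeGroup α)) (ψ : FreeGroup α → ℝ) : Prop :=
  IsSymmetricMap ψ ∧ IsQuasimorphism ψ ∧ DeltaContinuousCocycle D (d1 ψ)

/-- `ζ`-type sums: `zetaL A (g₁,…,g_k) g' h = Σ_j A(g_j, g_{j+1}⋯g_k·g', h)`. -/
def zetaL (A : FreeGroup α → FreeGroup α → FreeGroup α → ℝ) :
    List (FreeGroup α) → FreeGroup α → FreeGroup α → ℝ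
  | [], _, _ => 0
  | p :: rest, g', h => A p (rest.prod * g') h + zetaL A rest g' h

/-- `ζ(g,g',h) = Σ_j φ(g_j)·ω(g_{j+1}⋯g_k·g', h)` for `Δ(g) = (g₁,…,g_k)`. -/
def zetaD (D : FreeGroup α → List (FreeGroup α)) (φ : FreeGroup α → ℝ)
    (ω : FreeGroup α → FreeGroup α → ℝ) (g g' h : FreeGroup α) : ℝ :=
  zetaL (fun p u v => φ p * ω u v) (D g) g' h

/-- `w` is a subword of `g` (as reduced words). -/
def Subword (w g : FreeGroup α) : Prop :=
  w.toWord <:+: g.toWord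

/-- `w` is non self-overlapping: there are no reduced words `x, y` with `x` nontrivial
such that `w = xyx` as a reduced word. -/
def NonSelfOverlapping (w : FreeGroup α) : Prop :=
  ¬∃ x y : FreeGroup α, x ≠ 1 ∧ w = x * y * x ∧ ReducedProd [x, y, x]

/-- `ν_w(g)`: the number of occurrences of `w` as a subword of the reduced word `g`. -/
def occCount (w g : FreeGroup α) : ℕ :=
  ((List.range (g.toWord.length + 1)).filter
    (fun s => decide ((g.toWord.drop s).take w.toWord.length = w.toWord))).length

/-- The Brooks counting function `φ_w = ν_w − ν_{w⁻¹}`. -/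
noncomputable def brooksQM (w : FreeGroup α) (g : FreeGroup α) : ℝ :=
  (occCount w g : ℝ) - (occCount w⁻¹ g : ℝ)

/-- `φ` is a Brooks counting quasimorphism on some non self-overlapping word. -/
def IsBrooksQM (φ : FreeGroup α → ℝ) : Prop :=
  ∃ w : FreeGroup α, NonSelfOverlapping w ∧ φ = brooksQM w

/-- The interleaved list `(u₁, w^{ε₁}, u₂, …, u_{k−1}, w^{ε_{k−1}}, u_k)` built from
`us = (u₁,…,u_k)` and signs `eps = (ε₁,…,ε_{k−1})`. -/
def wfacList (w : FreeGroup α) : List (FreeGroup α) → List Bool → List (FreeGroup α)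
  | [], _ => []
  | [u], _ => [u]
  | u :: us, [] => u :: wfacList w us []
  | u :: us, e :: eps => u :: (if e then w else w⁻¹) :: wfacList w us eps

/-- `RolliWord l` : `l = ((n₁,m₁),…,(n_k,m_k))` encodes the normal form
`x_{n₁}^{m₁} ⋯ x_{n_k}^{m_k}` (all `m_j ≠ 0`, no consecutive equal indices). -/
def RolliWord {n : ℕ} (l : List (Fin n × ℤ)) : Prop :=
  (∀ p ∈ l, p.2 ≠ 0) ∧ l.Chain' fun p q => p.1 ≠ q.1

/-- The element `x_{n₁}^{m₁} ⋯ x_{n_k}^{m_k}` encoded by `l`. -/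
def rolliProd {n : ℕ} (l : List (Fin n × ℤ)) : FreeGroup (Fin n) :=
  (l.map fun p => FreeGroup.of p.1 ^ p.2).prod

/-- `φ` is a Rolli quasimorphism. -/
def IsRolliQM {n : ℕ} (φ : FreeGroup (Fin n) → ℝ) : Prop :=
  ∃ lam : Fin n → ℤ → ℝ,
    (∀ j, ∃ B : ℝ, ∀ m : ℤ, |lam j m| ≤ B) ∧
    (∀ j m, lam j (-m) = -lam j m) ∧
    φ 1 = 0 ∧
    ∀ l : List (Fin n × ℤ), RolliWord l → φ (rolliProd l) = (l.map fun p => lam p.1 p.2).sum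

/-- The list of letters (as group elements) of the reduced word representing `g`. -/
def letters (g : FreeGroup α) : List (FreeGroup α) :=
  g.toWord.map fun p => FreeGroup.mk [p]

/-- `d` is the common 2-path of `(g,h)`: `g = t₁⁻¹d` and `h = d⁻¹t₂` as reduced words,
with the tripod condition that `gh = t₁⁻¹t₂` is also reduced. -/
def IsCommon2Path (g h d : FreeGroup α) : Prop :=
  ∃ t₁ t₂ : FreeGroup α, g = t₁⁻¹ * d ∧ h = d⁻¹ * t₂ ∧
    ReducedProd [t₁⁻¹, d] ∧ ReducedProd [d⁻¹, t₂] ∧ ReducedProd [t₁⁻¹, t₂]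

/-- Case (a) of the alignment of `g, h, i` (Figure 4a). -/
def Align3A (g h i : FreeGroup α) : Prop :=
  ∃ t₁ t₂ t₃ t₄ t₅ : FreeGroup α,
    g = t₁ * t₂ ∧ h = t₂⁻¹ * t₃ * t₄ ∧ i = t₄⁻¹ * t₅ ∧
    ReducedProd [t₁, t₂] ∧ ReducedProd [t₂⁻¹, t₃, t₄] ∧ ReducedProd [t₄⁻¹, t₅] ∧
    ReducedProd [t₁, t₃, t₅]

/-- Case (b) of the alignment of `g, h, i` (Figure 4b). -/
def Align3B (g h i : FreeGroup α) : Prop :=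
  ∃ t₁ t₂ t₃ t₄ t₅ : FreeGroup α,
    g = t₁ * t₂ * t₃ ∧ h = t₃⁻¹ * t₄ ∧ i = t₄⁻¹ * t₂⁻¹ * t₅ ∧
    ReducedProd [t₁, t₂, t₃] ∧ ReducedProd [t₃⁻¹, t₄] ∧ ReducedProd [t₄⁻¹, t₂⁻¹, t₅] ∧
    ReducedProd [t₁, t₅]

/-- Case (c) of the alignment of `g, h, i` (Figure 4c), with common 3-path `c`. -/
def Align3C (g h i c : FreeGroup α) : Prop :=
  ∃ t₁ t₂ t₃ t₄ : FreeGroup α,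
    g = t₁⁻¹ * c * t₂ ∧ h = t₂⁻¹ * c⁻¹ * t₃ ∧ i = t₃⁻¹ * c * t₄ ∧
    ReducedProd [t₁⁻¹, c, t₂] ∧ ReducedProd [t₂⁻¹, c⁻¹, t₃] ∧ ReducedProd [t₃⁻¹, c, t₄] ∧
    ReducedProd [t₁⁻¹, t₃] ∧ ReducedProd [t₂⁻¹, t₄]

/-- `c` is the common 3-path of `(g,h,i)`: `c` in case (c), the identity otherwise. -/
def IsCommon3Path (g h i c : FreeGroup α) : Prop :=
  Align3C g h i c ∨ (c = 1 ∧ (Align3A g h i ∨ Align3B g h i))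

end Preamble

section RolliAux

variable {n : ℕ}

lemma rolliProd_append (l₁ l₂ : List (Fin n × ℤ)) :
    rolliProd (l₁ ++ l₂) = rolliProd l₁ * rolliProd l₂ := by
  simp [rolliProd]

lemma rolliProd_cons (p : Fin n × ℤ) (l : List (Fin n × ℤ)) :
    rolliProd (p :: l) = FreeGroup.of p.1 ^ p.2 * rolliProd l := by
  simp [rolliProd]

/-- The reversed, negated list represents the inverse. -/
lemma rolliProd_invList (l : List (Fin n × ℤ)) :
    rolliProd (l.reverse.map fun p => (p.1, -p.2)) = (rolliProd l)⁻¹ := by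
  induction l with
  | nil => simp [rolliProd]
  | cons p t ih =>
      simp only [List.reverse_cons, List.map_append, List.map_cons, List.map_nil,
        rolliProd_append, rolliProd_cons, ih]
      simp [rolliProd, zpow_neg, mul_inv_rev]

lemma rolliWord_invList {l : List (Fin n × ℤ)} (h : RolliWord l) :
    RolliWord (l.reverse.map fun p => (p.1, -p.2)) := by
  obtain ⟨h1, h2⟩ := h
  constructor
  · intro p hp
    simp only [List.mem_map, List.mem_reverse] at hp
    obtain ⟨q, hq, rfl⟩ := hp
    simpa using h1 q hq
  · unfold List.Chain' at h2 ⊢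
    rw [List.isChain_map, List.isChain_reverse]
    exact h2.imp fun a b hab => by simpa using Ne.symm hab

/-- Key merging lemma: the product of two Rolli words is represented by a Rolli
word whose `λ`-sum differs from the sum of the two sums by at most `3B`. -/
lemma rolli_merge (lam : Fin n → ℤ → ℝ) (B : ℝ) (hB : ∀ j m, |lam j m| ≤ B)
    (hB0 : 0 ≤ B) (hodd : ∀ j m, lam j (-m) = -lam j m) :
    ∀ k (l₁ l₂ : List (Fin n × ℤ)), l₁.length ≤ k → RolliWord l₁ → RolliWord l₂ →
    ∃ l, RolliWord l ∧ rolliProd l = rolliProd l₁ * rolliProd l₂ ∧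
      |((l₁.map fun p => lam p.1 p.2).sum + (l₂.map fun p => lam p.1 p.2).sum)
        - (l.map fun p => lam p.1 p.2).sum| ≤ 3 * B := by
  intro k
  induction k with
  | zero =>
      intro l₁ l₂ hlen h1 h2
      have : l₁ = [] := List.length_eq_zero_iff.mp (Nat.le_zero.mp hlen)
      subst this
      exact ⟨l₂, h2, by simp [rolliProd], by simpa using by linarith⟩
  | succ k ih =>
      intro l₁ l₂ hlen h1 h2
      rcases l₁.eq_nil_or_concat with rfl | ⟨l₁', p, rfl⟩
      · exact ⟨l₂, h2, by simp [rolliProd], by simpa using by linarith⟩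
      simp only [List.concat_eq_append] at hlen h1 ⊢
      rcases l₂ with _ | ⟨q, l₂'⟩
      · exact ⟨l₁' ++ [p], h1, by simp [rolliProd], by simpa using by linarith⟩
      -- extract structure of l₁ = l₁' ++ [p]
      obtain ⟨hne1, hch1⟩ := h1
      obtain ⟨hne2, hch2⟩ := h2
      unfold List.Chain' at hch1 hch2
      rw [List.isChain_append] at hch1
      obtain ⟨hch1', -, hlast⟩ := hch1
      have hlast' : ∀ x ∈ l₁'.getLast?, x.1 ≠ p.1 := by
        intro x hx
        exact hlast x hx p (by simp)
      have hlen' : l₁'.length ≤ k := by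
        simpa using Nat.le_of_succ_le_succ (by simpa using hlen)
      by_cases hj : p.1 = q.1
      · by_cases hm : p.2 + q.2 = 0
        · -- full cancellation of the junction
          have hq2 : q.2 = -p.2 := by linarith [hm]
          have h2' : RolliWord l₂' := ⟨fun x hx => hne2 x (by simp [hx]),
            (List.isChain_cons.mp hch2).2⟩
          obtain ⟨l, hl, hlp, hls⟩ := ih l₁' l₂' hlen' ⟨fun x hx => hne1 x (by simp [hx]), hch1'⟩ h2'
          refine ⟨l, hl, ?_, ?_⟩
          · rw [hlp, rolliProd_append, rolliProd_cons]
            have : FreeGroup.of p.1 ^ p.2 * FreeGroup.of q.1 ^ q.2 = 1 := by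
              rw [hj, ← zpow_add, ← hj, hm, zpow_zero]
            calc rolliProd l₁' * rolliProd l₂'
                = rolliProd l₁' * ((FreeGroup.of p.1 ^ p.2 * FreeGroup.of q.1 ^ q.2) *
                    rolliProd l₂') := by rw [this]; group
              _ = rolliProd l₁' * rolliProd [p] * (FreeGroup.of q.1 ^ q.2 * rolliProd l₂') := by
                    simp [rolliProd]; group
          · have hcancel : lam p.1 p.2 + lam q.1 q.2 = 0 := by
              rw [← hj, hq2, hodd]; ring
            calc |((l₁' ++ [p]).map fun r => lam r.1 r.2).sum +
                  ((q :: l₂').map fun r => lam r.1 r.2).sum -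
                  (l.map fun r => lam r.1 r.2).sum|
                = |(l₁'.map fun r => lam r.1 r.2).sum + (l₂'.map fun r => lam r.1 r.2).sum -
                  (l.map fun r => lam r.1 r.2).sum| := by
                    congr 1
                    simp only [List.map_append, List.map_cons, List.sum_append, List.sum_cons,
                      List.map_nil, List.sum_nil]
                    linarith [hcancel]
              _ ≤ 3 * B := hls
        · -- merge the junction into one syllable
          refine ⟨l₁' ++ (p.1, p.2 + q.2) :: l₂', ⟨?_, ?_⟩, ?_, ?_⟩
          · intro x hx
            rcases List.mem_append.mp hx with hx | hx
            · exact hne1 x (by simp [hx])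
            · rcases List.mem_cons.mp hx with rfl | hx
              · exact hm
              · exact hne2 x (by simp [hx])
          · unfold List.Chain'
            rw [List.isChain_append]
            refine ⟨hch1', List.isChain_cons.mpr ⟨?_, (List.isChain_cons.mp hch2).2⟩, ?_⟩
            · intro b hb
              have := (List.isChain_cons.mp hch2).1 b hb
              simpa [hj] using this
            · intro x hx y hy
              simp only [List.head?_cons, Option.mem_def, Option.some.injEq] at hy
              subst hy
              exact hlast' x hx
          · rw [rolliProd_append, rolliProd_cons, rolliProd_append, rolliProd_cons]
            simp only [rolliProd, List.map_cons, List.map_nil, List.prod_cons, List.prod_nil,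
              mul_one]
            rw [hj, zpow_add]
            group
          · simp only [List.map_append, List.map_cons, List.sum_append, List.sum_cons,
              List.map_nil, List.sum_nil]
            have h3 : |lam p.1 p.2 + lam q.1 q.2 - lam p.1 (p.2 + q.2)| ≤ 3 * B := by
              calc |lam p.1 p.2 + lam q.1 q.2 - lam p.1 (p.2 + q.2)|
                  ≤ |lam p.1 p.2| + |lam q.1 q.2| + |lam p.1 (p.2 + q.2)| := by
                    have := abs_sub (lam p.1 p.2 + lam q.1 q.2) (lam p.1 (p.2 + q.2))
                    calc _ ≤ |lam p.1 p.2 + lam q.1 q.2| + |lam p.1 (p.2+q.2)| :=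
                            abs_sub _ _
                      _ ≤ _ := by linarith [abs_add_le (lam p.1 p.2) (lam q.1 q.2)]
                _ ≤ 3 * B := by linarith [hB p.1 p.2, hB q.1 q.2, hB p.1 (p.2 + q.2)]
            convert h3 using 2
            ring
      · -- no interaction: concatenate
        refine ⟨(l₁' ++ [p]) ++ q :: l₂', ⟨?_, ?_⟩, by rw [rolliProd_append],
          by simp only [List.map_append, List.sum_append]; rw [sub_self, abs_zero]; linarith⟩
        · intro x hx
          rcases List.mem_append.mp hx with hx | hx
          exacts [hne1 x hx, hne2 x hx]
        · unfold List.Chain'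
          rw [List.isChain_append]
          refine ⟨List.isChain_append.mpr ⟨hch1', by simp, hlast⟩, hch2, ?_⟩
          intro x hx y hy
          simp only [List.getLast?_concat, Option.mem_def, Option.some.injEq] at hx
          simp only [List.head?_cons, Option.mem_def, Option.some.injEq] at hy
          subst hx; subst hy
          exact hj

lemma sum_invList (lam : Fin n → ℤ → ℝ) (hodd : ∀ j m, lam j (-m) = -lam j m)
    (l : List (Fin n × ℤ)) :
    ((l.reverse.map fun p => (p.1, -p.2)).map fun p => lam p.1 p.2).sum
      = -((l.map fun p => lam p.1 p.2).sum) := by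
  induction l with
  | nil => simp
  | cons p t ih =>
      simp only [List.reverse_cons, List.map_append, List.map_cons, List.map_nil,
        List.sum_append, List.sum_cons, List.sum_nil, List.map_cons, ih, hodd]
      ring

/-- Every element of the free group is represented by some Rolli word. -/
lemma rolli_exists (g : FreeGroup (Fin n)) : ∃ l, RolliWord l ∧ rolliProd l = g := by
  induction g using FreeGroup.induction_on with
  | C1 => exact ⟨[], ⟨by simp, by simp [List.Chain']⟩, by simp [rolliProd]⟩
  | of x => exact ⟨[(x, 1)], ⟨by simp, by simp [List.Chain']⟩, by simp [rolliProd]⟩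
  | inv_of x _ => exact ⟨[(x, -1)], ⟨by simp, by simp [List.Chain']⟩, by simp [rolliProd, zpow_neg]⟩
  | mul a b ha hb =>
      obtain ⟨l₁, h1, rfl⟩ := ha
      obtain ⟨l₂, h2, rfl⟩ := hb
      obtain ⟨l, hl, hlp, -⟩ := rolli_merge (fun _ _ => (0 : ℝ)) 0 (by simp) le_rfl
        (by simp) l₁.length l₁ l₂ le_rfl h1 h2
      exact ⟨l, hl, hlp⟩

end RolliAux

/-- Example 2.2: the Rolli map `φ(x_{n₁}^{m₁}⋯x_{n_k}^{m_k}) =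
Σ_j λ_{n_j}(m_j)` (for bounded alternating `λ_j : ℤ → ℝ`) is a symmetric quasimorphism. -/
theorem rolli_is_symmetric_qm {n : ℕ} (lam : Fin n → ℤ → ℝ)
    (hbd : ∀ j, ∃ B : ℝ, ∀ m : ℤ, |lam j m| ≤ B)
    (hodd : ∀ j m, lam j (-m) = -lam j m)
    (φ : FreeGroup (Fin n) → ℝ) (h1 : φ 1 = 0)
    (hφ : ∀ l : List (Fin n × ℤ), RolliWord l →
      φ (rolliProd l) = (l.map fun p => lam p.1 p.2).sum) :
    IsSymmetricMap φ ∧ IsQuasimorphism φ := by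
  -- a uniform bound on all the λ's
  have hBj : ∀ j, 0 ≤ Classical.choose (hbd j) := fun j =>
    le_trans (abs_nonneg _) (Classical.choose_spec (hbd j) 0)
  set B := ∑ j : Fin n, Classical.choose (hbd j) with hBdef
  have hB0 : 0 ≤ B := Finset.sum_nonneg fun j _ => hBj j
  have hB : ∀ j m, |lam j m| ≤ B := fun j m =>
    (Classical.choose_spec (hbd j) m).trans
      (Finset.single_le_sum (fun i _ => hBj i) (Finset.mem_univ j))
  constructor
  · -- symmetry
    intro g
    obtain ⟨l, hl, rfl⟩ := rolli_exists g
    have hinv := hφ _ (rolliWord_invList hl)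
    rw [rolliProd_invList] at hinv
    rw [hinv, hφ l hl]
    rw [sum_invList lam hodd l]
  · -- quasimorphism
    refine ⟨3 * B + 1, by linarith, ?_⟩
    intro g h
    obtain ⟨l₁, h1, rfl⟩ := rolli_exists g
    obtain ⟨l₂, h2, rfl⟩ := rolli_exists h
    obtain ⟨l, hl, hlp, hls⟩ := rolli_merge lam B hB hB0 hodd l₁.length l₁ l₂ le_rfl h1 h2
    have : d1 φ (rolliProd l₁) (rolliProd l₂)
        = (l₁.map fun p => lam p.1 p.2).sum + (l₂.map fun p => lam p.1 p.2).sum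
          - (l.map fun p => lam p.1 p.2).sum := by
      rw [d1, hφ l₁ h1, hφ l₂ h2, ← hlp, hφ l hl]
    rw [this]
    calc |(l₁.map fun p => lam p.1 p.2).sum + (l₂.map fun p => lam p.1 p.2).sum
          - (l.map fun p => lam p.1 p.2).sum| ≤ 3 * B := hls
      _ < 3 * B + 1 := by linarith
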